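/- Let ω:[0,∞)→[0,∞) be a continuity modulus satisfying (ω1) and (ω2), strictly increasing on a right neighborhood of 0, with inverse function ω^{-1}. Define g(σ) := √σ · ω^{-1}(σ) for σ > 0 in the domain of ω^{-1}; then g is strictly increasing, and denoting by h its inverse function, for every exponent γ < 3/2 one has lim_{z→+∞} z·[h(1/z)]^γ = +∞. -/

import Mathlib

/-- Let `ω` satisfy (ω1) and (ω2), strictly increasing on a
right neighborhood `[0,ν]` of `0`, with (local) inverse `ωinv`. Then
`g(σ) = √σ · ωinv σ` is strictly increasing, and for any inverse function `h`
of `g` and any exponent `γ < 3/2` one has `z · h(1/z)^γ → +∞` as `z → +∞`. -/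
theorem h_power_limit
    (ω : ℝ → ℝ)
    (hω_cont : ContinuousOn ω (Set.Ici 0))
    (hω_mono : MonotoneOn ω (Set.Ici 0))
    (hω_nonneg : ∀ σ ≥ (0:ℝ), 0 ≤ ω σ)
    (hω_zero : ω 0 = 0)
    (hω_subadd : ∀ a ≥ (0:ℝ), ∀ b ≥ (0:ℝ), ω (a + b) ≤ ω a + ω b)
    (hω2 : ∀ a b : ℝ, 0 < a → a ≤ b → a / ω a ≤ b / ω b)
    (ν : ℝ) (hν : 0 < ν)
    (hω_strict : StrictMonoOn ω (Set.Icc 0 ν))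
    (ωinv : ℝ → ℝ)
    (hinv_left : ∀ σ ∈ Set.Icc (0:ℝ) ν, ωinv (ω σ) = σ)
    (hinv_right : ∀ y ∈ Set.Icc 0 (ω ν), ω (ωinv y) = y) :
    StrictMonoOn (fun σ => Real.sqrt σ * ωinv σ) (Set.Ioo 0 (ω ν)) ∧
    ∀ h : ℝ → ℝ,
      (∀ σ ∈ Set.Ioo (0:ℝ) (ω ν), h (Real.sqrt σ * ωinv σ) = σ) →
      ∀ γ : ℝ, γ < 3 / 2 →
        Filter.Tendsto (fun z : ℝ => z * (h (1 / z)) ^ γ)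
          Filter.atTop Filter.atTop := by
  have hων : 0 < ω ν := by
    have := hω_strict (Set.left_mem_Icc.2 hν.le) (Set.right_mem_Icc.2 hν.le) hν
    simpa [hω_zero] using this
  -- ωinv maps [0, ω ν] into [0, ν]
  have key : ∀ y ∈ Set.Icc (0:ℝ) (ω ν), ωinv y ∈ Set.Icc (0:ℝ) ν := by
    intro y hy
    have hc : ContinuousOn ω (Set.Icc 0 ν) :=
      hω_cont.mono (fun x hx => hx.1)
    have hy' : y ∈ Set.Icc (ω 0) (ω ν) := by rw [hω_zero]; exact hy
    obtain ⟨σ, hσ, hσy⟩ := intermediate_value_Icc hν.le hc hy'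
    have : ωinv y = σ := by rw [← hσy, hinv_left σ hσ]
    rw [this]; exact hσ
  have hinv_mono : StrictMonoOn ωinv (Set.Icc 0 (ω ν)) := by
    intro a ha b hb hab
    by_contra hle
    push_neg at hle
    have := hω_mono (Set.mem_Ici.2 (key b hb).1) (Set.mem_Ici.2 (key a ha).1) hle
    rw [hinv_right a ha, hinv_right b hb] at this
    exact absurd this (not_le.2 hab)
  have hinv_pos : ∀ y ∈ Set.Ioc (0:ℝ) (ω ν), 0 < ωinv y := by
    intro y hy
    rcases lt_or_eq_of_le (key y ⟨hy.1.le, hy.2⟩).1 with h' | h'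
    · exact h'
    · exfalso
      have h2 := hinv_right y ⟨hy.1.le, hy.2⟩
      rw [← h', hω_zero] at h2
      exact absurd h2.symm hy.1.ne'
  set c := ω ν / ν with hc_def
  have hc : 0 < c := div_pos hων hν
  have hωlb : ∀ σ : ℝ, 0 < σ → σ ≤ ν → c * σ ≤ ω σ := by
    intro σ hσ hσν
    have hωσ : 0 < ω σ := by
      have := hω_strict (Set.left_mem_Icc.2 hν.le) ⟨hσ.le, hσν⟩ hσ
      simpa [hω_zero] using this
    have h2 := hω2 σ ν hσ hσν
    rw [div_le_div_iff₀ hωσ hων] at h2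
    rw [hc_def, div_mul_eq_mul_div, div_le_iff₀ hν]
    nlinarith
  have hinv_ub : ∀ y ∈ Set.Ioc (0:ℝ) (ω ν), ωinv y ≤ y / c := by
    intro y hy
    have h1 := hωlb (ωinv y) (hinv_pos y hy) (key y ⟨hy.1.le, hy.2⟩).2
    rw [hinv_right y ⟨hy.1.le, hy.2⟩] at h1
    rw [le_div_iff₀ hc]; linarith
  have hg_mono : StrictMonoOn (fun σ => Real.sqrt σ * ωinv σ) (Set.Ioo 0 (ω ν)) := by
    intro a ha b hb hab
    have h1 : Real.sqrt a < Real.sqrt b := Real.sqrt_lt_sqrt ha.1.le hab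
    have h2 : ωinv a < ωinv b :=
      hinv_mono ⟨ha.1.le, ha.2.le⟩ ⟨hb.1.le, hb.2.le⟩ hab
    exact mul_lt_mul'' h1 h2 (Real.sqrt_nonneg a) (hinv_pos a ⟨ha.1, ha.2.le⟩).le
  refine ⟨hg_mono, ?_⟩
  intro h hh γ hγ
  set e := γ - 3 / 2 with he_def
  have he : e < 0 := by rw [he_def]; linarith
  -- the comparison function tends to ∞ near 0⁺
  have hlim : Filter.Tendsto (fun σ : ℝ => c * σ ^ e) (nhdsWithin 0 (Set.Ioi 0))
      Filter.atTop := by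
    have h1 : Filter.Tendsto (fun x : ℝ => x ^ (-e)) Filter.atTop Filter.atTop :=
      tendsto_rpow_atTop (by linarith)
    have h2 : Filter.Tendsto (fun σ : ℝ => σ⁻¹) (nhdsWithin 0 (Set.Ioi 0))
        Filter.atTop := tendsto_inv_nhdsGT_zero
    have h3 := h1.comp h2
    have h4 : Filter.Tendsto (fun σ : ℝ => σ ^ e) (nhdsWithin 0 (Set.Ioi 0))
        Filter.atTop := by
      refine h3.congr' ?_
      filter_upwards [self_mem_nhdsWithin] with σ hσ
      have hσ0 : (0:ℝ) < σ := hσ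
      simp only [Function.comp]
      rw [Real.inv_rpow hσ0.le, Real.rpow_neg hσ0.le, inv_inv]
    exact h4.const_mul_atTop hc
  rw [Filter.tendsto_atTop]
  intro b
  have hev := hlim.eventually (Filter.eventually_ge_atTop b)
  obtain ⟨ε, hε, hεsub⟩ := mem_nhdsGT_iff_exists_Ioo_subset.mp hev
  have hε0 : (0:ℝ) < ε := hε
  set ε0 := min ε (ω ν) / 2 with hε0_def
  have hε0pos : 0 < ε0 := by positivity
  have hε0lt : ε0 < ω ν := by
    have : min ε (ω ν) ≤ ω ν := min_le_right _ _
    rw [hε0_def]; linarith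
  have hε0ε : ε0 < ε := by
    have : min ε (ω ν) ≤ ε := min_le_left _ _
    rw [hε0_def]; linarith
  set δ := Real.sqrt ε0 * ωinv ε0 with hδ_def
  have hδpos : 0 < δ :=
    mul_pos (Real.sqrt_pos.2 hε0pos) (hinv_pos ε0 ⟨hε0pos, hε0lt.le⟩)
  have hδGν : δ < Real.sqrt (ω ν) * ν := by
    have h1 : Real.sqrt ε0 < Real.sqrt (ω ν) := Real.sqrt_lt_sqrt hε0pos.le hε0lt
    have h2 : ωinv ε0 ≤ ν := (key ε0 ⟨hε0pos.le, hε0lt.le⟩).2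
    exact mul_lt_mul h1 h2 (hinv_pos ε0 ⟨hε0pos, hε0lt.le⟩) (Real.sqrt_nonneg _)
  have hG_cont : ContinuousOn (fun σ => Real.sqrt (ω σ) * σ) (Set.Icc 0 ν) := by
    exact ((hω_cont.mono (fun x hx => hx.1)).sqrt).mul continuousOn_id
  rw [Filter.eventually_atTop]
  refine ⟨max (2 / δ) 1, fun z hz => ?_⟩
  have hz1 : (1:ℝ) ≤ z := le_trans (le_max_right _ _) hz
  have hz0 : 0 < z := lt_of_lt_of_le one_pos hz1
  have hzδ : 1 / z < δ := by
    have h2 : 2 / δ ≤ z := le_trans (le_max_left _ _) hz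
    rw [div_lt_iff₀ hz0]
    rw [div_le_iff₀ hδpos] at h2
    nlinarith
  have hz_mem : 1 / z ∈ Set.Ioo ((fun σ => Real.sqrt (ω σ) * σ) 0)
      ((fun σ => Real.sqrt (ω σ) * σ) ν) := by
    constructor
    · simp only [mul_zero]
      positivity
    · exact lt_trans hzδ hδGν
  obtain ⟨σ, hσ, hσz⟩ := intermediate_value_Ioo hν.le hG_cont hz_mem
  set y := ω σ with hy_def
  have hy0 : 0 < y := by
    have := hω_strict (Set.left_mem_Icc.2 hν.le) ⟨hσ.1.le, hσ.2.le⟩ hσ.1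
    simpa [hω_zero] using this
  have hyν : y < ω ν :=
    hω_strict ⟨hσ.1.le, hσ.2.le⟩ (Set.right_mem_Icc.2 hν.le) hσ.2
  have hinvy : ωinv y = σ := hinv_left σ ⟨hσ.1.le, hσ.2.le⟩
  have hgy : Real.sqrt y * ωinv y = 1 / z := by
    rw [hinvy]; exact hσz
  have hhy : h (1 / z) = y := by
    rw [← hgy]; exact hh y ⟨hy0, hyν⟩
  -- y < ε0 hence y < ε
  have hyε0 : y < ε0 := by
    have := (hg_mono.lt_iff_lt ⟨hy0, hyν⟩ ⟨hε0pos, hε0lt⟩).mp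
    apply this
    show Real.sqrt y * ωinv y < Real.sqrt ε0 * ωinv ε0
    rw [hgy]
    exact hzδ
  have hbe : b ≤ c * y ^ e := hεsub ⟨hy0, lt_trans hyε0 hε0ε⟩
  -- bound g y from above
  have hgy_pos : 0 < Real.sqrt y * ωinv y := by
    rw [hgy]; positivity
  have hsqy : Real.sqrt y * y = y ^ ((3:ℝ)/2) := by
    rw [Real.sqrt_eq_rpow]
    nth_rewrite 2 [← Real.rpow_one y]
    rw [← Real.rpow_add hy0]
    norm_num
  have hgy_le : Real.sqrt y * ωinv y ≤ y ^ ((3:ℝ)/2) / c := by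
    have h1 : ωinv y ≤ y / c := hinv_ub y ⟨hy0, hyν.le⟩
    calc Real.sqrt y * ωinv y ≤ Real.sqrt y * (y / c) :=
          mul_le_mul_of_nonneg_left h1 (Real.sqrt_nonneg _)
      _ = y ^ ((3:ℝ)/2) / c := by rw [mul_div_assoc', hsqy]
  have hkey : c * y ^ e * (Real.sqrt y * ωinv y) ≤ y ^ γ := by
    calc c * y ^ e * (Real.sqrt y * ωinv y)
        ≤ c * y ^ e * (y ^ ((3:ℝ)/2) / c) := by
          apply mul_le_mul_of_nonneg_left hgy_le
          positivity
      _ = y ^ e * y ^ ((3:ℝ)/2) := by field_simp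
      _ = y ^ γ := by
          rw [← Real.rpow_add hy0]
          congr 1
          rw [he_def]; ring
  have hzy : (Real.sqrt y * ωinv y) * z = 1 := by
    rw [hgy]; field_simp
  rw [hhy]
  have hyγ : 0 ≤ y ^ γ := (Real.rpow_pos_of_pos hy0 γ).le
  nlinarith [mul_le_mul_of_nonneg_right hkey hz0.le,
    mul_pos (Real.rpow_pos_of_pos hy0 e) hc]
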